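/- Let g : ℝ → ℝ be bounded measurable with compact support, ∫ g = 0, Hg ∈ L¹(ℝ), and define u₁(z) = ∫_ℝ log|(1 - z g(t))/(1 - z(g(t) + i|Hg(t)|))| dt. Then -lim_{y→0⁺} u₁(iy)/y = ∫_ℝ |Hg(t)| dt; that is, lim_{y→0⁺} (1/y) ∫_ℝ log| (1 - i y g(t)) / (1 - i y g(t) + y|Hg(t)|) | dt = -∫_ℝ |Hg(t)| dt. -/

import Mathlib

open MeasureTheory

/-- `H` is the (principal value) Hilbert transform of `h`, almost everywhere. -/
def IsPV (h H : ℝ → ℝ) : Prop :=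
  ∀ᵐ ξ : ℝ ∂volume, Filter.Tendsto
    (fun ε : ℝ => (1 / Real.pi) * ∫ t in {t : ℝ | ε < |t - ξ|}, h t / (t - ξ))
    (nhdsWithin 0 (Set.Ioi 0)) (nhds (H ξ))

noncomputable def stmt9phi (a b y : ℝ) : ℝ :=
  (1/2) * Real.log (1 + y^2*a^2) - (1/2) * Real.log ((1 + y*b)^2 + y^2*a^2)

lemma stmt9_abs_eq (a b y : ℝ) (hb : 0 ≤ b) (hy : 0 < y) :
    Real.log (‖(1 - Complex.I * y * (a:ℂ)) /
      (1 - Complex.I * y * (a:ℂ) + ((y * b : ℝ) : ℂ))‖) = stmt9phi a b y := by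
  have h1 : (0:ℝ) < 1 + y^2*a^2 := by positivity
  have hyb : (0:ℝ) < 1 + y*b := by positivity
  have h2 : (0:ℝ) < (1 + y*b)^2 + y^2*a^2 := by positivity
  have hN : ‖1 - Complex.I * y * (a:ℂ)‖ = Real.sqrt (1 + y^2*a^2) := by
    rw [Complex.norm_def, Complex.normSq_apply]
    simp [Complex.sub_re, Complex.sub_im, Complex.mul_re, Complex.mul_im]
    ring_nf
  have hD : ‖1 - Complex.I * y * (a:ℂ) + ((y * b : ℝ) : ℂ)‖
      = Real.sqrt ((1 + y*b)^2 + y^2*a^2) := by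
    rw [Complex.norm_def, Complex.normSq_apply]
    simp [Complex.add_re, Complex.add_im, Complex.sub_re, Complex.sub_im,
      Complex.mul_re, Complex.mul_im]
    ring_nf
  rw [norm_div, hN, hD, Real.log_div (by positivity) (by positivity),
    Real.log_sqrt h1.le, Real.log_sqrt h2.le, stmt9phi]
  ring

lemma stmt9_phi_bound (a b y : ℝ) (hb : 0 ≤ b) (hy : 0 < y) : |stmt9phi a b y| ≤ y * b := by
  have h1 : (0:ℝ) < 1 + y^2*a^2 := by positivity
  have hyb : (0:ℝ) < 1 + y*b := by positivity
  have h2 : (0:ℝ) < (1 + y*b)^2 + y^2*a^2 := by positivity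
  have hyb0 : 0 ≤ y*b := mul_nonneg hy.le hb
  rw [abs_le]
  constructor
  · have key : (1+y*b)^2*(1+y^2*a^2) - ((1+y*b)^2+y^2*a^2)
        = (2*(y*b) + (y*b)^2)*(y^2*a^2) := by ring
    have hpos : 0 ≤ (2*(y*b) + (y*b)^2)*(y^2*a^2) := by positivity
    have hle : (1 + y*b)^2 + y^2*a^2 ≤ (1+y*b)^2 * (1 + y^2*a^2) := by linarith
    have hlog : Real.log ((1 + y*b)^2 + y^2*a^2)
        ≤ 2 * Real.log (1+y*b) + Real.log (1 + y^2*a^2) := by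
      calc Real.log ((1 + y*b)^2 + y^2*a^2) ≤ Real.log ((1+y*b)^2 * (1 + y^2*a^2)) :=
            Real.log_le_log h2 hle
        _ = 2 * Real.log (1+y*b) + Real.log (1 + y^2*a^2) := by
            rw [Real.log_mul (by positivity) (by positivity), Real.log_pow]; push_cast; ring
    have hsmall : Real.log (1+y*b) ≤ y*b := by
      have := Real.log_le_sub_one_of_pos hyb
      linarith
    unfold stmt9phi; linarith
  · have key2 : (1 + y*b)^2 + y^2*a^2 - (1 + y^2*a^2) = 2*(y*b) + (y*b)^2 := by ring
    have hpos2 : 0 ≤ 2*(y*b) + (y*b)^2 := by positivity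
    have : Real.log (1 + y^2*a^2) ≤ Real.log ((1 + y*b)^2 + y^2*a^2) :=
      Real.log_le_log h1 (by linarith)
    unfold stmt9phi; linarith

lemma stmt9_phi_tendsto (a b : ℝ) :
    Filter.Tendsto (fun y => stmt9phi a b y / y) (nhdsWithin 0 (Set.Ioi 0)) (nhds (-b)) := by
  have h1 : HasDerivAt (fun y : ℝ => 1 + y^2*a^2) 0 0 := by
    simpa using ((hasDerivAt_pow 2 (0:ℝ)).mul_const (a^2)).const_add 1
  have hA : HasDerivAt (fun y : ℝ => 1 + y*b) b 0 := by
    simpa using ((hasDerivAt_id (0:ℝ)).mul_const b).const_add 1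
  have h2 : HasDerivAt (fun y : ℝ => (1 + y*b)^2 + y^2*a^2) (2*b) 0 := by
    have := (hA.fun_pow 2).add ((hasDerivAt_pow 2 (0:ℝ)).mul_const (a^2))
    refine this.congr_deriv ?_
    norm_num
  have hl1 := h1.log (by norm_num)
  have hl2 := h2.log (by norm_num)
  have hd : HasDerivAt (stmt9phi a b) (-b) 0 := by
    have := (hl1.const_mul ((1:ℝ)/2)).sub (hl2.const_mul ((1:ℝ)/2))
    refine this.congr_deriv ?_
    norm_num
    ring
  rw [hasDerivAt_iff_tendsto_slope] at hd
  have hphi0 : stmt9phi a b 0 = 0 := by simp [stmt9phi]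
  have := hd.mono_left (nhdsWithin_mono 0
    (fun x hx => (Set.mem_Ioi.mp hx).ne' : Set.Ioi (0:ℝ) ⊆ {x | x ≠ 0}))
  refine this.congr (fun y => ?_)
  simp [slope_def_field, hphi0]

/-- For `g` bounded measurable with compact support, `∫ g = 0`, `Hg ∈ L¹` its Hilbert
transform, and `u₁(z) = ∫ log|(1-z g)/(1-z(g+i|Hg|))| dt`:
`lim_{y→0⁺} u₁(iy)/y = -∫ |Hg|`. -/
theorem stmt_9 (g : ℝ → ℝ) (M : ℝ) (hb : ∀ t, |g t| ≤ M) (hm : Measurable g)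
    (hc : HasCompactSupport g) (h0 : ∫ t, g t = 0) (Hg : ℝ → ℝ) (hHm : Measurable Hg)
    (hpv : IsPV g Hg) (hint : Integrable Hg) :
    Filter.Tendsto
      (fun y : ℝ => (1 / y) * ∫ t, Real.log ‖
        ((1 - Complex.I * y * (g t : ℂ)) /
          (1 - Complex.I * y * (g t : ℂ) + (y * |Hg t| : ℝ)))‖)
      (nhdsWithin 0 (Set.Ioi 0))
      (nhds (-∫ t, |Hg t|)) := by
  have hself : ∀ᶠ y in nhdsWithin (0:ℝ) (Set.Ioi 0), y ∈ Set.Ioi (0:ℝ) :=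
    self_mem_nhdsWithin
  rw [show (-∫ t, |Hg t|) = ∫ t, -|Hg t| from (integral_neg _).symm]
  simp_rw [← MeasureTheory.integral_const_mul]
  apply tendsto_integral_filter_of_dominated_convergence (fun t => |Hg t|)
  · filter_upwards [hself] with y hy
    have heq : (fun t => (1/y) * Real.log ‖
        ((1 - Complex.I * y * (g t : ℂ)) /
          (1 - Complex.I * y * (g t : ℂ) + (y * |Hg t| : ℝ)))‖)
        = fun t => (1/y) * stmt9phi (g t) |Hg t| y := by
      funext t
      rw [stmt9_abs_eq (g t) |Hg t| y (abs_nonneg _) hy]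
    rw [heq]
    apply Measurable.aestronglyMeasurable
    unfold stmt9phi
    have m1 : Measurable fun t => Real.log (1 + y^2*(g t)^2) :=
      Real.measurable_log.comp (by fun_prop)
    have m2 : Measurable fun t => Real.log ((1 + y*|Hg t|)^2 + y^2*(g t)^2) :=
      Real.measurable_log.comp (by fun_prop)
    exact ((m1.const_mul _).sub (m2.const_mul _)).const_mul _
  · filter_upwards [hself] with y hy
    have hy' : (0:ℝ) < y := hy
    refine Filter.Eventually.of_forall (fun t => ?_)
    rw [stmt9_abs_eq (g t) |Hg t| y (abs_nonneg _) hy']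
    rw [Real.norm_eq_abs, abs_mul, abs_of_pos (by positivity : (0:ℝ) < 1/y)]
    calc (1/y) * |stmt9phi (g t) |Hg t| y| ≤ (1/y) * (y * |Hg t|) := by
          apply mul_le_mul_of_nonneg_left (stmt9_phi_bound _ _ _ (abs_nonneg _) hy')
          positivity
      _ = |Hg t| := by field_simp
  · exact hint.abs
  · refine Filter.Eventually.of_forall (fun t => ?_)
    have := stmt9_phi_tendsto (g t) |Hg t|
    refine this.congr' ?_
    filter_upwards [hself] with y hy
    rw [stmt9_abs_eq (g t) |Hg t| y (abs_nonneg _) hy]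
    rw [div_eq_inv_mul, one_div]
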